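/- Let v be a Llull matrix with CLC structure and positive turnouts t_{xy} = v_{xy} + v_{yx} > 0 for all x ≠ y. Then the relative scores q_{xy} = v_{xy}/t_{xy} satisfy: q_{xy} ≥ q_{yx} whenever x <_ξ y, and q_{xz} ≥ q_{yz}, q_{zx} ≤ q_{zy} whenever x <_ξ y and z ∉ {x,y}, where ξ is any admissible order. -/

import Mathlib

/-- The minimum score along a path `x, z₁, …, zₖ, y` (the list gives the
intermediate points; the empty list is the direct link from `x` to `y`). -/
def chainMin {S : Type*} (v : S → S → ℝ) : S → List S → S → ℝ
  | x, [], y => v x y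
  | x, z :: l, y => min (v x z) (chainMin v z l y)

/-- Indirect (max-min) score: supremum over all paths from `x` to `y`
of the minimum direct score along the path. -/
noncomputable def iScore {S : Type*} (v : S → S → ℝ) (x y : S) : ℝ :=
  sSup {r : ℝ | ∃ l : List S, r = chainMin v x l y}

/-- A Llull matrix: preference scores in `[0,1]` with `v x y + v y x ≤ 1`. -/
def IsLlull {S : Type*} (v : S → S → ℝ) : Prop :=
  ∀ x y : S, x ≠ y → 0 ≤ v x y ∧ v x y ≤ 1 ∧ v x y + v y x ≤ 1


/-- CLC structure with respect to the linear order on `S` (the admissible order ξ):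
(1) `v x y ≥ v y x` for `x < y`; (2) `v x z = max (v x y) (v y z)` and
(3) `v z x = min (v z y) (v y x)` for `x < y < z`; (4) `0 ≤ t x z − t x' z ≤ m x x'`
for `z ∉ {x, x'}` where `x'` is the immediate successor (`x ⋖ x'`),
`t x y = v x y + v y x` and `m x y = v x y − v y x`. -/
def CLC {S : Type*} [LinearOrder S] (v : S → S → ℝ) : Prop :=
  (∀ x y : S, x < y → v y x ≤ v x y) ∧
  (∀ x y z : S, x < y → y < z → v x z = max (v x y) (v y z)) ∧
  (∀ x y z : S, x < y → y < z → v z x = min (v z y) (v y x)) ∧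
  (∀ x x' z : S, x ⋖ x' → z ≠ x → z ≠ x' →
    0 ≤ (v x z + v z x) - (v x' z + v z x') ∧
    (v x z + v z x) - (v x' z + v z x') ≤ v x x' - v x' x)

/-- With CLC structure and positive turnouts, the relative scores
`q x y = v x y / (v x y + v y x)` satisfy the corresponding inequalities. -/
theorem stmt16 {S : Type*} [LinearOrder S] [Fintype S]
    (v : S → S → ℝ) (hv : IsLlull v) (hclc : CLC v)
    (ht : ∀ x y : S, x ≠ y → 0 < v x y + v y x) :
    (∀ x y : S, x < y →
      v y x / (v y x + v x y) ≤ v x y / (v x y + v y x)) ∧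
    (∀ x y z : S, x < y → z ≠ x → z ≠ y →
      v y z / (v y z + v z y) ≤ v x z / (v x z + v z x) ∧
      v z x / (v z x + v x z) ≤ v z y / (v z y + v y z)) := by
  obtain ⟨h1, h2, h3, _⟩ := hclc
  have key : ∀ x y z : S, x < y → z ≠ x → z ≠ y →
      v y z * v z x ≤ v x z * v z y := by
    intro x y z hxy hzx hzy
    have nxz := (hv x z (Ne.symm hzx)).1
    have nzx := (hv z x hzx).1
    have nyz := (hv y z (Ne.symm hzy)).1
    have nzy := (hv z y hzy).1
    rcases lt_trichotomy z x with h | h | h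
    · -- z < x < y
      have e1 : v z y = max (v z x) (v x y) := h2 z x y h hxy
      have e2 : v y z = min (v y x) (v x z) := h3 z x y h hxy
      have := le_max_left (v z x) (v x y)
      have := min_le_right (v y x) (v x z)
      calc v y z * v z x ≤ v x z * v z x := by nlinarith
        _ ≤ v x z * v z y := by nlinarith
    · exact absurd h hzx
    · rcases lt_trichotomy z y with h' | h' | h'
      · -- x < z < y
        have a := h1 x z h
        have b := h1 z y h'
        nlinarith
      · exact absurd h' hzy
      · -- x < y < z
        have e1 : v x z = max (v x y) (v y z) := h2 x y z hxy h'
        have e2 : v z x = min (v z y) (v y x) := h3 x y z hxy h'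
        have := le_max_right (v x y) (v y z)
        have := min_le_left (v z y) (v y x)
        calc v y z * v z x ≤ v x z * v z x := by nlinarith
          _ ≤ v x z * v z y := by nlinarith
  constructor
  · intro x y hxy
    have ht1 := ht x y hxy.ne
    have hm := h1 x y hxy
    rw [div_le_div_iff₀ (by linarith) (by linarith)]
    nlinarith
  · intro x y z hxy hzx hzy
    have k := key x y z hxy hzx hzy
    have t1 := ht x z (Ne.symm hzx)
    have t2 := ht y z (Ne.symm hzy)
    constructor
    · rw [div_le_div_iff₀ t2 t1]; nlinarith
    · rw [div_le_div_iff₀ (by linarith) (by linarith)]; nlinarith
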